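/- arXiv:0911.1103 — 4 statements merged into one kernel-verified Lean document; each statement's English description precedes it below -/
import Mathlib

section
/- Let G be a finite group, N a normal subgroup, and suppose α is an automorphism of G that fixes N pointwise and induces the identity automorphism on G/N. Then α^|N| is the identity automorphism of G; in particular the order of α divides |N|. -/
/-- If `α` is an automorphism of a finite group `G` fixing a normal subgroup `N` pointwise and
inducing the identity on `G/N`, then `α^|N| = 1`; in particular the order of `α` divides `|N|`. -/
theorem aut_pow_card_eq_one_of_fix (G : Type*) [Group G] [Finite G]
    (N : Subgroup G) (hN : N.Normal) (α : MulAut G)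
    (hfix : ∀ s ∈ N, α s = s) (hquot : ∀ g : G, α g * g⁻¹ ∈ N) :
    α ^ Nat.card N = 1 ∧ orderOf α ∣ Nat.card N := by
  have key : ∀ (k : ℕ) (g : G), (α ^ k) g = (α g * g⁻¹) ^ k * g := by
    intro k
    induction k with
    | zero => intro g; simp
    | succ k ih =>
      intro g
      have : (α ^ (k + 1)) g = α ((α ^ k) g) := by
        rw [pow_succ']; rfl
      rw [this, ih g, map_mul, hfix _ (Subgroup.pow_mem N (hquot g) k)]
      set n := α g * g⁻¹ with hn
      have hg : α g = n * g := by rw [hn]; group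
      rw [hg]; group
  have hpow : α ^ Nat.card N = 1 := by
    ext g
    have hn : ((⟨α g * g⁻¹, hquot g⟩ : N) : G) ^ Nat.card N = 1 := by
      rw [← SubgroupClass.coe_pow, pow_card_eq_one']
      rfl
    simp only [key, Subgroup.coe_mk] at hn ⊢
    rw [hn, one_mul, MulAut.one_apply]
  exact ⟨hpow, orderOf_dvd_of_pow_eq_one hpow⟩
end

section
/- Let p be an odd prime, n ≥ 1 an integer, K a complete discretely valued field of mixed characteristic (0,p) with valuation v normalized so v(p) = 1, and η ∈ K with v(η) > 1/p. Then for every i with 2 ≤ i ≤ p^n, i ≠ p, the coefficient of T^i in (1 + ηT)^{p^n}, namely C(p^n, i)·η^i, has valuation strictly greater than n + 1/(p-1). -/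
private lemma aux_pow_ge (p k : ℕ) (hp : 3 ≤ p) (hk : 2 ≤ k) : p * k + 2 ≤ p ^ k := by
  induction k with
  | zero => omega
  | succ m ih =>
    rcases Nat.lt_or_ge m 2 with hm | hm
    · interval_cases m
      · omega
      · simp only [pow_succ, pow_one]; nlinarith
    · have h := ih (by omega)
      have h2 : (p * m + 2) * p ≤ p ^ m * p := Nat.mul_le_mul_right p h
      have h3 : p * m ≤ p * (p * m) := Nat.le_mul_of_pos_left _ (by omega)
      rw [pow_succ]
      calc p * (m + 1) + 2 ≤ (p * m + 2) * p := by nlinarith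
        _ ≤ p ^ m * p := h2

private lemma aux_arith (p k i : ℕ) (hp3 : 3 ≤ p) (hpk : p ^ k ∣ i) (h2 : 2 ≤ i)
    (hip : i ≠ p) : p * k * (p - 1) + p + 1 ≤ i * (p - 1) := by
  obtain ⟨q, rfl⟩ : ∃ q, p = q + 3 := ⟨p - 3, by omega⟩
  simp only [show q + 3 - 1 = q + 2 from rfl]
  match k with
  | 0 => nlinarith
  | 1 =>
    rw [pow_one] at hpk
    obtain ⟨m, rfl⟩ := hpk
    have hm : 2 ≤ m := by
      rcases Nat.lt_or_ge m 2 with h | h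
      · interval_cases m <;> omega
      · exact h
    nlinarith [Nat.mul_le_mul_right ((q + 3) * (q + 2)) hm]
  | (m + 2) =>
    have h1 : (q + 3) ^ (m + 2) ≤ i := Nat.le_of_dvd (by omega) hpk
    have h2 := aux_pow_ge (q + 3) (m + 2) (by omega) (by omega)
    nlinarith

private lemma aux_choose_dvd (p n i : ℕ) (hp : p.Prime) (hi : i ≠ 0) (hin : i ≤ p ^ n) :
    p ^ (n - padicValNat p i) ∣ (p ^ n).choose i := by
  haveI : Fact p.Prime := ⟨hp⟩
  have h1 := Nat.Prime.emultiplicity_choose_prime_pow hp hin hi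
  have hfi : FiniteMultiplicity p i :=
    Nat.finiteMultiplicity_iff.2 ⟨hp.ne_one, Nat.pos_of_ne_zero hi⟩
  have hmi : multiplicity p i = padicValNat p i := by
    have h := padicValNat_eq_emultiplicity (p := p) hi
    rw [hfi.emultiplicity_eq_multiplicity] at h
    exact_mod_cast h.symm
  have h2 : padicValNat p ((p ^ n).choose i) = n - padicValNat p i := by
    have hc := padicValNat_eq_emultiplicity (p := p) (Nat.choose_pos hin).ne'
    rw [h1, hmi] at hc
    exact_mod_cast hc
  exact h2 ▸ pow_padicValNat_dvd

private lemma aux_nat_val_le_one {K : Type*} [Field K] (v : Valuation K NNReal) (m : ℕ) :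
    v (m : K) ≤ 1 := by
  induction m with
  | zero => simp
  | succ m ih =>
    push_cast
    exact le_trans (v.map_add _ _) (by simp [ih])

/-- Let `p` be an odd prime, `n ≥ 1`, `K` a field of characteristic `0` with a rank-one
valuation `v` normalized by `v(p) = 1/p` (multiplicatively; i.e. additive valuation `1`), and
`η ∈ K` with additive valuation `> 1/p`.  Then for `2 ≤ i ≤ p^n`, `i ≠ p`, the coefficient
`C(p^n, i)·η^i` of `T^i` in `(1 + ηT)^{p^n}` has additive valuation `> n + 1/(p-1)`. -/
theorem binomial_coeff_valuation (p : ℕ) (hp : p.Prime) (hodd : Odd p)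
    (n : ℕ) (hn : 1 ≤ n) (K : Type*) [Field K] [CharZero K]
    (v : Valuation K NNReal) (hvp : v (p : K) = (p : NNReal)⁻¹)
    (η : K) (hη : v η < (p : NNReal) ^ (-(1 / (p : ℝ)))) :
    ∀ i : ℕ, 2 ≤ i → i ≤ p ^ n → i ≠ p →
      v (((p ^ n).choose i : K) * η ^ i) <
        (p : NNReal) ^ (-((n : ℝ) + 1 / ((p : ℝ) - 1))) := by
  intro i h2i hin hip
  have hi0 : i ≠ 0 := by omega
  have hp3 : 3 ≤ p := by
    rcases hp.eq_two_or_odd with h | _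
    · exfalso; rw [h] at hodd; exact (Nat.not_odd_iff_even.mpr even_two) hodd
    · rcases Nat.lt_or_ge p 3 with h | h
      · interval_cases p <;> simp_all [Nat.Prime]
      · exact h
  have hpR : (1 : ℝ) < (p : ℝ) := by exact_mod_cast hp.one_lt
  have hpN : (1 : NNReal) < (p : NNReal) := by exact_mod_cast hp.one_lt
  have hp0 : (p : NNReal) ≠ 0 := by positivity
  by_cases hη0 : η = 0
  · rw [hη0, zero_pow hi0, mul_zero, v.map_zero]
    exact NNReal.rpow_pos (by positivity)
  set k := padicValNat p i with hk
  have hpkdvd : p ^ k ∣ i := pow_padicValNat_dvd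
  have hkn : k ≤ n := by
    have h1 : p ^ k ≤ p ^ n := le_trans (Nat.le_of_dvd (by omega) hpkdvd) hin
    exact (Nat.pow_le_pow_iff_right hp.one_lt).mp h1
  -- the key real inequality on exponents
  have hkey : (n : ℝ) + 1 / ((p : ℝ) - 1) < ((n - k : ℕ) : ℝ) + (i : ℝ) * (1 / (p : ℝ)) := by
    have harith := aux_arith p k i hp3 hpkdvd h2i hip
    have harithR : (p : ℝ) * k * ((p : ℝ) - 1) + (p : ℝ) + 1 ≤ (i : ℝ) * ((p : ℝ) - 1) := by
      have h : ((p * k * (p - 1) + p + 1 : ℕ) : ℝ) ≤ ((i * (p - 1) : ℕ) : ℝ) := by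
        exact_mod_cast harith
      push_cast [Nat.cast_sub (by omega : 1 ≤ p)] at h
      linarith
    have hcast : ((n - k : ℕ) : ℝ) = (n : ℝ) - (k : ℝ) := by
      rw [Nat.cast_sub hkn]
    have hmain : (k : ℝ) + 1 / ((p : ℝ) - 1) < (i : ℝ) * (1 / (p : ℝ)) := by
      rw [mul_one_div, add_div' _ _ _ (by linarith : (p : ℝ) - 1 ≠ 0),
        div_lt_div_iff₀ (by linarith) (by linarith)]
      nlinarith
    rw [hcast]; linarith
  obtain ⟨m, hm⟩ := aux_choose_dvd p n i hp hi0 hin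
  have hvC : v (((p ^ n).choose i : K)) ≤ (p : NNReal) ^ (-((n - k : ℕ) : ℝ)) := by
    rw [hm]
    push_cast
    rw [v.map_mul, v.map_pow, hvp, NNReal.rpow_neg, NNReal.rpow_natCast, ← inv_pow]
    calc ((p : NNReal)⁻¹) ^ (n - k) * v (m : K)
        ≤ ((p : NNReal)⁻¹) ^ (n - k) * 1 := mul_le_mul_right (aux_nat_val_le_one v m) _
      _ = ((p : NNReal)⁻¹) ^ (n - k) := mul_one _
  have hvη : v η ^ i < (p : NNReal) ^ ((-(1 / (p : ℝ))) * (i : ℝ)) := by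
    have h1 : v η ^ i < ((p : NNReal) ^ (-(1 / (p : ℝ)))) ^ i :=
      pow_lt_pow_left₀ hη (by positivity) hi0
    rwa [← NNReal.rpow_natCast ((p : NNReal) ^ (-(1 / (p : ℝ)))) i,
      ← NNReal.rpow_mul] at h1
  calc v (((p ^ n).choose i : K) * η ^ i)
      = v (((p ^ n).choose i : K)) * v η ^ i := by rw [v.map_mul, v.map_pow]
    _ ≤ (p : NNReal) ^ (-((n - k : ℕ) : ℝ)) * v η ^ i := mul_le_mul_left hvC _
    _ < (p : NNReal) ^ (-((n - k : ℕ) : ℝ)) * (p : NNReal) ^ ((-(1 / (p : ℝ))) * (i : ℝ)) := by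
        exact (mul_lt_mul_iff_right₀ (NNReal.rpow_pos (pos_iff_ne_zero.mpr hp0))).mpr hvη
    _ = (p : NNReal) ^ (-((n - k : ℕ) : ℝ) + (-(1 / (p : ℝ))) * (i : ℝ)) :=
        (NNReal.rpow_add hp0 _ _).symm
    _ < (p : NNReal) ^ (-((n : ℝ) + 1 / ((p : ℝ) - 1))) := by
        apply NNReal.rpow_lt_rpow_of_exponent_lt hpN
        nlinarith [hkey]
end

section
/- Let R be a complete discrete valuation ring of mixed characteristic (0,p) with valuation v normalized so that v(p) = 1, and suppose g = 1 + bw with b ∈ R, v(b) = n + 1/(p-1) for some integer n > 1, and w ∈ R{T} (a convergent power series). Then the binomial series for the p^{n-1}-st root of g, namely 1 + (1/p^{n-1})bw + ((1/p^{n-1})((1/p^{n-1})-1)/2!)(bw)² + ⋯, converges in R{T}, and equals 1 + a·u where a = b/p^{n-1}, v(a) = p/(p-1), and u ≡ w modulo the maximal ideal of R. -/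
open PowerSeries

/-- The coefficient `C(1/p^(n-1), j)` of the binomial series for the `p^(n-1)`-st root. -/
noncomputable def binomialRootCoeff (p n j : ℕ) : ℚ :=
  (∏ t ∈ Finset.range j, ((1 / (p : ℚ) ^ (n - 1)) - (t : ℚ))) / (Nat.factorial j : ℚ)


open Finset


lemma descPochhammer_smeval_rat (r : ℚ) : ∀ j : ℕ,
    (descPochhammer ℤ j).smeval r = ∏ t ∈ Finset.range j, (r - (t : ℚ))
  | 0 => by simp [descPochhammer_zero, Polynomial.smeval_one]
  | (j+1) => by
    rw [descPochhammer_succ_right, Polynomial.smeval_mul, descPochhammer_smeval_rat r j,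
      Finset.prod_range_succ, Polynomial.smeval_sub, Polynomial.smeval_X,
      Polynomial.smeval_natCast]
    simp

lemma ring_choose_rat (r : ℚ) (j : ℕ) :
    Ring.choose r j = (∏ t ∈ Finset.range j, (r - (t : ℚ))) / (Nat.factorial j : ℚ) := by
  have h := Ring.descPochhammer_eq_factorial_smul_choose r j
  rw [descPochhammer_smeval_rat] at h
  rw [h, nsmul_eq_mul]
  field_simp

/-- the binomial power series over ℚ -/
noncomputable def ratBinomialSeries (r : ℚ) : PowerSeries ℚ :=
  PowerSeries.mk fun j => Ring.choose r j

lemma ratBinomialSeries_mul (r s : ℚ) :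
    ratBinomialSeries r * ratBinomialSeries s = ratBinomialSeries (r + s) := by
  ext k
  rw [coeff_mul]
  simp only [ratBinomialSeries, coeff_mk]
  rw [Ring.add_choose_eq k (Commute.all r s)]

lemma ratBinomialSeries_pow (r : ℚ) : ∀ m : ℕ,
    (ratBinomialSeries r) ^ m = ratBinomialSeries (m * r)
  | 0 => by
    ext k
    simp only [pow_zero, ratBinomialSeries, Nat.cast_zero, zero_mul, coeff_mk]
    rcases Nat.eq_zero_or_pos k with h | h
    · subst h; simp [Ring.choose_zero_right]
    · rw [PowerSeries.coeff_one, if_neg h.ne', Ring.choose_zero_ite, if_neg h.ne']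
  | (m+1) => by
    rw [pow_succ, ratBinomialSeries_pow r m, ratBinomialSeries_mul]
    norm_num
    ring_nf

lemma ratBinomialSeries_one : ratBinomialSeries 1 = 1 + PowerSeries.X := by
  ext k
  simp only [ratBinomialSeries, coeff_mk, map_add]
  rw [show (1 : ℚ) = ((1 : ℕ) : ℚ) by norm_num, Ring.choose_natCast]
  rcases k with _ | _ | k <;> simp [Nat.choose, PowerSeries.coeff_X]

open Finset

lemma legendre_bound {p : ℕ} (hp : p.Prime) {j : ℕ} (hj : 1 ≤ j) :
    (p - 1) * padicValNat p (Nat.factorial j) ≤ j - 1 := by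
  haveI : Fact p.Prime := ⟨hp⟩
  rw [sub_one_mul_padicValNat_factorial]
  have hsum : 1 ≤ (p.digits j).sum := by
    by_contra h
    push_neg at h
    have hs : (p.digits j).sum = 0 := by omega
    have hall : ∀ d ∈ p.digits j, d = 0 := by
      intro d hd
      by_contra hd0
      have : 1 ≤ (p.digits j).sum := List.single_le_sum (fun _ _ => Nat.zero_le _) d hd |>.trans' (by omega)
      omega
    have hj0 : j = 0 := by
      have hd := Nat.ofDigits_digits p j
      rw [← hd]
      have hrep : p.digits j = List.replicate (p.digits j).length 0 :=
        List.eq_replicate_of_mem hall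
      rw [hrep]
      induction (p.digits j).length with
      | zero => simp
      | succ k ih => simp [List.replicate_succ, Nat.ofDigits_cons, ih]
    omega
  omega

section Val
variable {K : Type*} [Field K] (v : Valuation K NNReal)

lemma v_natCast_le_one (m : ℕ) : v (m : K) ≤ 1 := by
  induction m with
  | zero => simp
  | succ k ih =>
    push_cast
    exact le_trans (v.map_add _ _) (by simp [ih])

lemma v_intCast_le_one (m : ℤ) : v (m : K) ≤ 1 := by
  rcases Int.natAbs_eq m with h | h <;> rw [h]
  · rw [Int.cast_natCast]
    exact v_natCast_le_one v m.natAbs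
  · rw [Int.cast_neg, Int.cast_natCast, Valuation.map_neg]
    exact v_natCast_le_one v m.natAbs

lemma v_coprime_eq_one {p : ℕ} (hp : p.Prime) (hvp : v (p : K) < 1)
    {m : ℕ} (hm : ¬ p ∣ m) : v (m : K) = 1 := by
  have hcop : Nat.gcd m p = 1 := Nat.Coprime.gcd_eq_one ((hp.coprime_iff_not_dvd.mpr hm).symm)
  have hbez : (1 : ℤ) = m * Nat.gcdA m p + p * Nat.gcdB m p := by
    have := Nat.gcd_eq_gcd_ab m p
    rw [hcop] at this
    exact_mod_cast this
  refine le_antisymm (v_natCast_le_one v m) ?_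
  by_contra h
  push_neg at h
  have h1 : v ((1 : ℤ) : K) = 1 := by simp
  have hK : ((1 : ℤ) : K) = (m : K) * ((Nat.gcdA m p : ℤ) : K) + (p : K) * ((Nat.gcdB m p : ℤ) : K) := by
    rw [hbez]; push_cast; ring
  have hlt : v ((1 : ℤ) : K) < 1 := by
    rw [hK]
    refine lt_of_le_of_lt (v.map_add _ _) (max_lt ?_ ?_)
    · rw [v.map_mul]
      calc v (m : K) * v ((Nat.gcdA m p : ℤ) : K) ≤ v (m : K) * 1 :=
            mul_le_mul_right (v_intCast_le_one v _) _
        _ < 1 := by simpa using h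
    · rw [v.map_mul]
      calc v (p : K) * v ((Nat.gcdB m p : ℤ) : K) ≤ v (p : K) * 1 :=
            mul_le_mul_right (v_intCast_le_one v _) _
        _ < 1 := by simpa using hvp
  rw [h1] at hlt
  exact lt_irrefl _ hlt

lemma v_factorial {p : ℕ} (hp : p.Prime) (hvp : v (p : K) < 1) (hvpne : v (p : K) ≠ 0) (j : ℕ) :
    v ((Nat.factorial j : ℕ) : K) = v (p : K) ^ (padicValNat p (Nat.factorial j)) := by
  have hfac : p ^ ((Nat.factorial j).factorization p) * ((Nat.factorial j) / p ^ ((Nat.factorial j).factorization p)) = Nat.factorial j :=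
    Nat.ordProj_mul_ordCompl_eq_self _ p
  have hnd : ¬ p ∣ ((Nat.factorial j) / p ^ ((Nat.factorial j).factorization p)) :=
    Nat.not_dvd_ordCompl hp (Nat.factorial_ne_zero j)
  have : ((Nat.factorial j : ℕ) : K) = (p : K) ^ ((Nat.factorial j).factorization p) * (((Nat.factorial j) / p ^ ((Nat.factorial j).factorization p) : ℕ) : K) := by
    conv_lhs => rw [← hfac]
    push_cast
    ring
  rw [this, v.map_mul, v.map_pow, v_coprime_eq_one v hp hvp hnd, mul_one,
    Nat.factorization_def _ hp]
end Val

open PowerSeries Finset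

section PS
variable {K : Type*} [Field K] (v : Valuation K NNReal)

lemma coeff_bdd_mul {f g : PowerSeries K} (hf : ∀ i, v (coeff (R := K) i f) ≤ 1)
    (hg : ∀ i, v (coeff (R := K) i g) ≤ 1) : ∀ i, v (coeff (R := K) i (f * g)) ≤ 1 := by
  intro i
  rw [coeff_mul]
  apply v.map_sum_le
  intro x _
  rw [map_mul]
  exact mul_le_one' (hf _) (hg _)

lemma coeff_bdd_pow {f : PowerSeries K} (hf : ∀ i, v (coeff (R := K) i f) ≤ 1) :
    ∀ j i, v (coeff (R := K) i (f ^ j)) ≤ 1 := by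
  intro j
  induction j with
  | zero => intro i; simp [coeff_one]; split <;> simp
  | succ k ih =>
    rw [pow_succ]
    exact coeff_bdd_mul v ih hf

lemma coeff_mul_small {f g : PowerSeries K} {ε : NNReal} (hε : 0 < ε)
    (hf1 : ∀ i, v (coeff (R := K) i f) ≤ 1) (hg1 : ∀ i, v (coeff (R := K) i g) ≤ 1)
    {Mf Mg : ℕ} (hf : ∀ i ≥ Mf, v (coeff (R := K) i f) < ε) (hg : ∀ i ≥ Mg, v (coeff (R := K) i g) < ε) :
    ∀ i ≥ Mf + Mg, v (coeff (R := K) i (f * g)) < ε := by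
  intro i hi
  rw [coeff_mul]
  apply v.map_sum_lt hε.ne'
  intro x hx
  rw [Finset.HasAntidiagonal.mem_antidiagonal] at hx
  rw [map_mul]
  rcases le_or_gt Mf x.1 with h | h
  · calc v (coeff (R := K) x.1 f) * v (coeff (R := K) x.2 g) ≤ v (coeff (R := K) x.1 f) * 1 :=
        mul_le_mul_right (hg1 _) _
      _ < ε := by simpa using hf _ h
  · have h2 : Mg ≤ x.2 := by omega
    calc v (coeff (R := K) x.1 f) * v (coeff (R := K) x.2 g) ≤ 1 * v (coeff (R := K) x.2 g) :=
        mul_le_mul_left (hf1 _) _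
      _ < ε := by simpa using hg _ h2

lemma coeff_pow_small {w : PowerSeries K} (hw1 : ∀ i, v (coeff (R := K) i w) ≤ 1)
    (hw2 : ∀ ε : NNReal, 0 < ε → ∃ M : ℕ, ∀ i ≥ M, v (coeff (R := K) i w) < ε) :
    ∀ j : ℕ, ∀ ε : NNReal, 0 < ε → ∃ M : ℕ, ∀ i ≥ M, v (coeff (R := K) i (w ^ j)) < ε := by
  intro j
  induction j with
  | zero =>
    intro ε hε
    exact ⟨1, fun i hi => by rw [pow_zero, coeff_one, if_neg (by omega)]; simpa using hε⟩
  | succ k ih =>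
    intro ε hε
    obtain ⟨Mf, hMf⟩ := ih ε hε
    obtain ⟨Mg, hMg⟩ := hw2 ε hε
    exact ⟨Mf + Mg, by rw [pow_succ]; exact coeff_mul_small v hε (coeff_bdd_pow v hw1 k) hw1 hMf hMg⟩
end PS

open PowerSeries Finset

section Poly
variable {K : Type*} [Field K] [CharZero K] (v : Valuation K NNReal) (b : K) (γ : NNReal)

/-- coefficient-size property for polynomials over ℚ -/
def HPoly (P : Polynomial ℚ) : Prop :=
  ∀ k : ℕ, v (((P.coeff k : ℚ) : K) * b ^ k) ≤ γ ^ k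

lemma HPoly_one : HPoly v b γ 1 := by
  intro k
  rcases Nat.eq_zero_or_pos k with h | h
  · subst h; simp
  · rw [Polynomial.coeff_one, if_neg h.ne']; simp

lemma HPoly_X (hbγ : v b ≤ γ) : HPoly v b γ Polynomial.X := by
  intro k
  rcases eq_or_ne k 1 with h | h
  · subst h; simpa using hbγ
  · rw [Polynomial.coeff_X, if_neg (Ne.symm h)]; simp

lemma HPoly_sub {P Q : Polynomial ℚ} (hP : HPoly v b γ P) (hQ : HPoly v b γ Q) :
    HPoly v b γ (P - Q) := by
  intro k
  rw [Polynomial.coeff_sub]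
  push_cast
  rw [sub_mul]
  exact le_trans (v.map_sub _ _) (max_le (hP k) (hQ k))

lemma HPoly_add {P Q : Polynomial ℚ} (hP : HPoly v b γ P) (hQ : HPoly v b γ Q) :
    HPoly v b γ (P + Q) := by
  intro k
  rw [Polynomial.coeff_add]
  push_cast
  rw [add_mul]
  exact le_trans (v.map_add _ _) (max_le (hP k) (hQ k))

lemma HPoly_mul {P Q : Polynomial ℚ} (hP : HPoly v b γ P) (hQ : HPoly v b γ Q) :
    HPoly v b γ (P * Q) := by
  intro k
  have hexp : (((P * Q).coeff k : ℚ) : K) * b ^ k =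
      ∑ x ∈ Finset.HasAntidiagonal.antidiagonal k,
        (((P.coeff x.1 : ℚ) : K) * b ^ x.1) * (((Q.coeff x.2 : ℚ) : K) * b ^ x.2) := by
    rw [Polynomial.coeff_mul]
    push_cast
    rw [Finset.sum_mul]
    apply Finset.sum_congr rfl
    intro x hx
    rw [Finset.HasAntidiagonal.mem_antidiagonal] at hx
    rw [← hx, pow_add]
    ring
  rw [hexp]
  apply v.map_sum_le
  intro x hx
  rw [Finset.HasAntidiagonal.mem_antidiagonal] at hx
  rw [map_mul, ← hx, pow_add]
  exact mul_le_mul' (hP x.1) (hQ x.2)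

lemma HPoly_pow {P : Polynomial ℚ} (hP : HPoly v b γ P) (m : ℕ) : HPoly v b γ (P ^ m) := by
  induction m with
  | zero => simpa using HPoly_one v b γ
  | succ k ih => rw [pow_succ]; exact HPoly_mul v b γ ih hP

variable (w : PowerSeries K)

lemma eval_coeff (P : Polynomial ℚ) {D : ℕ} (hD : P.natDegree < D) (i : ℕ) :
    coeff (R := K) i (P.eval₂ ((C (R := K)).comp (Rat.castHom K)) (C (R := K) b * w)) =
      ∑ k ∈ Finset.range D, ((P.coeff k : ℚ) : K) * b ^ k * coeff (R := K) i (w ^ k) := by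
  rw [Polynomial.eval₂_eq_sum_range' _ hD, map_sum]
  apply Finset.sum_congr rfl
  intro k _
  rw [mul_pow, ← map_pow, RingHom.comp_apply, ← mul_assoc, ← map_mul, coeff_C_mul]
  rfl

lemma eval_small (hγ : γ ≤ 1) (hw1 : ∀ i, v (coeff (R := K) i w) ≤ 1)
    (P : Polynomial ℚ) (N : ℕ) {D : ℕ} (hD : P.natDegree < D)
    (hHP : HPoly v b γ P) (hlow : ∀ k < N, P.coeff k = 0) (i : ℕ) :
    v (coeff (R := K) i (P.eval₂ ((C (R := K)).comp (Rat.castHom K)) (C (R := K) b * w))) ≤ γ ^ N := by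
  rw [eval_coeff b w P hD i]
  apply v.map_sum_le
  intro k _
  rcases lt_or_ge k N with h | h
  · rw [hlow k h]
    simp
  · rw [map_mul]
    calc v (((P.coeff k : ℚ) : K) * b ^ k) * v (coeff (R := K) i (w ^ k))
        ≤ γ ^ k * 1 := mul_le_mul' (hHP k) (by
          -- bound coefficients of w^k by 1
          exact coeff_bdd_pow v hw1 k i)
      _ ≤ γ ^ N := by
          rw [mul_one]
          exact pow_le_pow_of_le_one (zero_le) hγ h
end Poly


/-- partial sums of `∑ e j * coeff i (w^j)` -/
noncomputable def pSum {K : Type*} [Field K] (e : ℕ → K) (w : PowerSeries K) (N i : ℕ) : K :=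
  ∑ j ∈ Finset.range N, e j * coeff (R := K) i (w ^ j)


/-- Let `R` be a complete discrete valuation ring of mixed characteristic `(0, p)` (encoded via
its fraction field `K`, a complete discretely valued field with `v(p) = 1` additively, i.e.
`v p = 1/p` multiplicatively, whose ring of integers is `{x | v x ≤ 1}`), let `g = 1 + b·w`
with `v(b) = n + 1/(p-1)`, `n > 1`, and `w ∈ R{T}` (a power series with integral coefficients
tending to `0`).  Then the binomial series for the `p^(n-1)`-st root of `g` converges in
`R{T}` and equals `1 + a·u`, where `a = b/p^(n-1)`, `v(a) = p/(p-1)`, and `u ≡ w` modulo the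
maximal ideal of `R`. -/
theorem binomial_root_of_one_plus_bw (p : ℕ) (hp : p.Prime) (n : ℕ) (hn : 1 < n)
    (K : Type*) [Field K] [CharZero K]
    (v : Valuation K NNReal) (hvp : v (p : K) = (p : NNReal)⁻¹)
    (hcomplete : ∀ a : ℕ → K,
      (∀ ε : NNReal, 0 < ε → ∃ M : ℕ, ∀ i ≥ M, ∀ j ≥ M, v (a i - a j) < ε) →
      ∃ x : K, ∀ ε : NNReal, 0 < ε → ∃ M : ℕ, ∀ i ≥ M, v (a i - x) < ε)
    (hdisc : ∃ π : K, v π < 1 ∧ ∀ x : K, x ≠ 0 → ∃ m : ℤ, v x = v π ^ m)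
    (b : K) (hb : v b = (p : NNReal) ^ (-((n : ℝ) + 1 / ((p : ℝ) - 1))))
    (w : PowerSeries K) (hw1 : ∀ i : ℕ, v (coeff (R := K) i w) ≤ 1)
    (hw2 : ∀ ε : NNReal, 0 < ε → ∃ M : ℕ, ∀ i ≥ M, v (coeff (R := K) i w) < ε) :
    ∃ u : PowerSeries K,
      (∀ i : ℕ, v (coeff (R := K) i u) ≤ 1) ∧
      (∀ ε : NNReal, 0 < ε → ∃ M : ℕ, ∀ i ≥ M, v (coeff (R := K) i u) < ε) ∧
      (∀ i : ℕ, v (coeff (R := K) i (u - w)) < 1) ∧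
      v (b / (p : K) ^ (n - 1)) = (p : NNReal) ^ (-((p : ℝ) / ((p : ℝ) - 1))) ∧
      (1 + C (R := K) (b / (p : K) ^ (n - 1)) * u) ^ (p ^ (n - 1)) = 1 + C (R := K) b * w ∧
      (∀ ε : NNReal, 0 < ε → ∃ M : ℕ, ∀ N ≥ M, ∀ i : ℕ,
        v (coeff (R := K) i
            ((∑ j ∈ Finset.range N, C (R := K) ((binomialRootCoeff p n j : ℚ) : K) * (C (R := K) b * w) ^ j) -
              (1 + C (R := K) (b / (p : K) ^ (n - 1)) * u))) < ε) := by
  classical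
  have hp2 : 2 ≤ p := hp.two_le
  have hq1 : (1 : NNReal) < (p : NNReal) := by exact_mod_cast hp.one_lt
  have hq0 : (p : NNReal) ≠ 0 := (lt_trans zero_lt_one hq1).ne'
  have hpK : (p : K) ≠ 0 := Nat.cast_ne_zero.mpr hp.pos.ne'
  have hpR1 : (1 : ℝ) < (p : ℝ) := by exact_mod_cast hp.one_lt
  have hpp : (0 : ℝ) < (p : ℝ) - 1 := by linarith
  set q : NNReal := (p : NNReal) with hqdef
  have hmono : ∀ {x y : ℝ}, x ≤ y → q ^ x ≤ q ^ y :=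
    fun h => NNReal.rpow_le_rpow_of_exponent_le hq1.le h
  have haddE : ∀ x y : ℝ, q ^ (x + y) = q ^ x * q ^ y := fun x y => NNReal.rpow_add hq0 x y
  have hqposr : ∀ x : ℝ, 0 < q ^ x := fun x => NNReal.rpow_pos (lt_trans zero_lt_one hq1)
  -- v b ≠ 0, b ≠ 0
  have hvbpos : 0 < v b := hb ▸ hqposr _
  have hb0 : b ≠ 0 := v.ne_zero_iff.mp hvbpos.ne'
  -- v (p^(n-1))
  have hcast_n1 : (((n - 1 : ℕ) : ℝ)) = (n : ℝ) - 1 := by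
    have := hn.le
    push_cast [Nat.cast_sub (by omega : 1 ≤ n)]
    ring
  have hinvpow : ∀ k : ℕ, (q⁻¹ : NNReal) ^ k = q ^ (-(k : ℝ)) := by
    intro k
    rw [NNReal.rpow_neg, NNReal.rpow_natCast, inv_pow]
  have hvpn : v ((p : K) ^ (n - 1)) = q ^ (-((n : ℝ) - 1)) := by
    rw [map_pow, hvp, hinvpow, hcast_n1]
  -- value of a
  have hva : v (b / (p : K) ^ (n - 1)) = q ^ (-((p : ℝ) / ((p : ℝ) - 1))) := by
    rw [map_div₀, hb, hvpn, ← NNReal.rpow_sub hq0]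
    congr 1
    field_simp
    ring
  -- value of each factor (1/p^(n-1) - t)
  have hvr : v ((1 : K) / (p : K) ^ (n - 1)) = q ^ (n - 1 : ℕ) := by
    rw [map_div₀, map_one, map_pow, hvp]
    rw [one_div, ← inv_pow, inv_inv]
  have hone_lt : (1 : NNReal) < q ^ (n - 1 : ℕ) :=
    one_lt_pow₀ hq1 (by omega)
  have hfactor : ∀ t : ℕ, v ((1 : K) / (p : K) ^ (n - 1) - (t : K)) = q ^ (n - 1 : ℕ) := by
    intro t
    rcases Nat.eq_zero_or_pos t with h | h
    · subst h; rw [Nat.cast_zero, sub_zero, hvr]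
    · rw [v.map_sub_eq_of_lt_left, hvr]
      rw [hvr]
      exact lt_of_le_of_lt (v_natCast_le_one v t) hone_lt
  -- v of c j
  have hvc : ∀ j : ℕ, v (((binomialRootCoeff p n j : ℚ) : K)) =
      q ^ ((n - 1) * j) * q ^ (padicValNat p (Nat.factorial j)) := by
    intro j
    have hcast : ((binomialRootCoeff p n j : ℚ) : K) =
        (∏ t ∈ Finset.range j, ((1 : K) / (p : K) ^ (n - 1) - (t : K))) /
          ((Nat.factorial j : ℕ) : K) := by
      rw [binomialRootCoeff]
      push_cast
      ring
    have hvp_lt1 : v ((p : K)) < 1 := by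
      rw [hvp]
      exact NNReal.inv_lt_one_iff hq0 |>.mpr hq1
    have hvp_ne0 : v ((p : K)) ≠ 0 := by
      rw [hvp]
      simpa using hq0
    rw [hcast, map_div₀, map_prod, v_factorial v hp hvp_lt1 hvp_ne0 j, hvp]
    rw [Finset.prod_congr rfl (fun t _ => hfactor t), Finset.prod_const, Finset.card_range,
      ← pow_mul]
    rw [div_eq_mul_inv, ← inv_pow, inv_inv]
  -- Legendre bound (real form)
  have hLeg : ∀ j : ℕ, 1 ≤ j →
      (padicValNat p (Nat.factorial j) : ℝ) * ((p : ℝ) - 1) ≤ (j : ℝ) - 1 := by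
    intro j hj
    have h := legendre_bound hp hj
    have hcast : (((p - 1) * padicValNat p (Nat.factorial j) : ℕ) : ℝ) ≤ ((j - 1 : ℕ) : ℝ) := by
      exact_mod_cast h
    push_cast [Nat.cast_sub (by omega : 1 ≤ p), Nat.cast_sub hj] at hcast
    linarith
  -- master estimate
  have hvcb : ∀ j : ℕ, 1 ≤ j → v (((binomialRootCoeff p n j : ℚ) : K) * b ^ j) ≤
      q ^ (-(j : ℝ) - 1 / ((p : ℝ) - 1)) := by
    intro j hj
    have hval : v (((binomialRootCoeff p n j : ℚ) : K) * b ^ j) =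
        q ^ ((((n - 1) * j : ℕ) : ℝ) + ((padicValNat p (Nat.factorial j) : ℕ) : ℝ)
          + (j : ℝ) * (-((n : ℝ) + 1 / ((p : ℝ) - 1)))) := by
      rw [map_mul, map_pow, hvc j, hb]
      rw [haddE, haddE, NNReal.rpow_natCast, NNReal.rpow_natCast]
      congr 1
      rw [mul_comm ((j : ℝ)) _, NNReal.rpow_mul, NNReal.rpow_natCast]
    rw [hval]
    apply hmono
    have hL := hLeg j hj
    have hns : (((n - 1) * j : ℕ) : ℝ) = ((n : ℝ) - 1) * (j : ℝ) := by
      push_cast [Nat.cast_sub (by omega : 1 ≤ n)]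
      ring
    rw [hns]
    have hinv : (padicValNat p (Nat.factorial j) : ℝ) ≤ ((j : ℝ) - 1) / ((p : ℝ) - 1) :=
      (le_div_iff₀ hpp).mpr (hLeg j hj)
    have h2 : ((j : ℝ) - 1) / ((p : ℝ) - 1) = (j : ℝ) * ((p : ℝ) - 1)⁻¹ - ((p : ℝ) - 1)⁻¹ := by
      field_simp
    have hgoal : ((n : ℝ) - 1) * (j : ℝ) + (padicValNat p (Nat.factorial j) : ℝ)
        + (j : ℝ) * (-((n : ℝ) + 1 / ((p : ℝ) - 1)))
        = (padicValNat p (Nat.factorial j) : ℝ) - (j : ℝ) - (j : ℝ) * ((p : ℝ) - 1)⁻¹ := by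
      ring
    rw [hgoal]
    have h4 : -(j : ℝ) - 1 / ((p : ℝ) - 1) = -(j : ℝ) - ((p : ℝ) - 1)⁻¹ := by ring
    rw [h4]
    linarith [hinv, h2]
  -- gamma
  set γ : NNReal := q⁻¹ with hγdef
  have hγ1 : γ < 1 := NNReal.inv_lt_one_iff hq0 |>.mpr hq1
  have hγ0 : γ ≠ 0 := by rw [hγdef]; simpa using hq0
  have hγpow : ∀ k : ℕ, γ ^ k = q ^ (-(k : ℝ)) := hinvpow
  have hγpos : (0:NNReal) < γ := pos_iff_ne_zero.mpr hγ0
  -- uniform H bound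
  have hHcb : ∀ j : ℕ, v (((binomialRootCoeff p n j : ℚ) : K) * b ^ j) ≤ γ ^ j := by
    intro j
    rcases Nat.eq_zero_or_pos j with h | h
    · subst h
      simp [binomialRootCoeff]
    · refine le_trans (hvcb j h) ?_
      rw [hγpow]
      apply hmono
      have : (0:ℝ) < 1 / ((p : ℝ) - 1) := by positivity
      linarith
  -- a
  set a : K := b / (p : K) ^ (n - 1) with hadef
  have hva0 : 0 < v a := hva ▸ hqposr _
  have ha0 : a ≠ 0 := v.ne_zero_iff.mp hva0.ne'
  have hvainv : (v a)⁻¹ = q ^ ((p : ℝ) / ((p : ℝ) - 1)) := by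
    rw [hva, ← NNReal.rpow_neg, neg_neg]
  have hva_le1 : v a ≤ 1 := by
    rw [hva, ← NNReal.rpow_zero q]
    apply hmono
    rw [neg_nonpos]
    positivity
  -- e
  set e : ℕ → K := fun j => if j = 0 then 0 else ((binomialRootCoeff p n j : ℚ) : K) * b ^ j / a
    with hedef
  have he0 : e 0 = 0 := by simp [hedef]
  have hc1 : binomialRootCoeff p n 1 = 1 / (p : ℚ) ^ (n - 1) := by
    simp [binomialRootCoeff]
  have he1 : e 1 = 1 := by
    rw [hedef]
    simp only [one_ne_zero, if_neg, if_false]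
    rw [hc1, hadef]
    push_cast
    field_simp
  have hae : ∀ j : ℕ, 1 ≤ j → a * e j = ((binomialRootCoeff p n j : ℚ) : K) * b ^ j := by
    intro j hj
    rw [hedef]
    simp only [Nat.pos_iff_ne_zero.mp hj, if_false]
    rw [mul_comm, div_mul_cancel₀ _ ha0]
  have hve : ∀ j : ℕ, v (e j) ≤ γ ^ (j - 1) := by
    intro j
    rcases Nat.eq_zero_or_pos j with h | h
    · subst h; simp [he0]
    · have hj0 : j ≠ 0 := h.ne'
      rw [hedef]
      simp only [hj0, if_false]
      rw [map_div₀]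
      rw [div_eq_mul_inv, hvainv]
      calc v (((binomialRootCoeff p n j : ℚ) : K) * b ^ j) * q ^ ((p : ℝ) / ((p : ℝ) - 1))
          ≤ q ^ (-(j : ℝ) - 1 / ((p : ℝ) - 1)) * q ^ ((p : ℝ) / ((p : ℝ) - 1)) :=
            mul_le_mul_left (hvcb j h) _
        _ = q ^ (-(j : ℝ) - 1 / ((p : ℝ) - 1) + (p : ℝ) / ((p : ℝ) - 1)) := (haddE _ _).symm
        _ = q ^ (-(((j : ℕ) - 1 : ℕ) : ℝ)) := by
            congr 1
            rw [Nat.cast_sub h]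
            push_cast
            field_simp
            ring
        _ = γ ^ (j - 1) := (hγpow _).symm
  have hve1 : ∀ j : ℕ, v (e j) ≤ 1 :=
    fun j => le_trans (hve j) (pow_le_one₀ (zero_le) hγ1.le)
  -- partial sums and Cauchy property
  have hcau : ∀ i N M : ℕ, N ≤ M → v (pSum e w M i - pSum e w N i) ≤ γ ^ (N - 1) := by
    intro i N M hNM
    rw [pSum, pSum, ← Finset.sum_Ico_eq_sub _ hNM]
    apply v.map_sum_le
    intro j hj
    rw [Finset.mem_Ico] at hj
    rw [map_mul]
    calc v (e j) * v (coeff (R := K) i (w ^ j)) ≤ γ ^ (j-1) * 1 :=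
        mul_le_mul' (hve j) (coeff_bdd_pow v hw1 j i)
      _ ≤ γ ^ (N-1) := by
        rw [mul_one]
        exact pow_le_pow_of_le_one (zero_le) hγ1.le (by omega)
  have hsmall : ∀ ε : NNReal, 0 < ε → ∃ M : ℕ, 1 ≤ M ∧ ∀ N, M ≤ N → γ ^ (N - 1) < ε := by
    intro ε hε
    obtain ⟨k, hk⟩ := exists_pow_lt_of_lt_one hε hγ1
    refine ⟨k + 1, by omega, fun N hN => ?_⟩
    calc γ ^ (N - 1) ≤ γ ^ k := pow_le_pow_of_le_one (zero_le) hγ1.le (by omega)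
      _ < ε := hk
  -- limits
  have hex : ∀ i : ℕ, ∃ x : K, ∀ ε : NNReal, 0 < ε → ∃ M : ℕ, ∀ N ≥ M,
      v (pSum e w N i - x) < ε := by
    intro i
    apply hcomplete
    intro ε hε
    obtain ⟨M, hM1, hM⟩ := hsmall ε hε
    refine ⟨M, fun i' hi' j' hj' => ?_⟩
    rcases le_total j' i' with h | h
    · exact lt_of_le_of_lt (hcau i j' i' h) (hM j' hj')
    · rw [v.map_sub_swap]
      exact lt_of_le_of_lt (hcau i i' j' h) (hM i' hi')
  choose U hU using hex
  have hclose : ∀ i N : ℕ, v (U i - pSum e w N i) ≤ γ ^ (N - 1) := by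
    intro i N
    by_contra hcon
    push_neg at hcon
    have hpos : 0 < v (U i - pSum e w N i) := lt_of_le_of_lt (zero_le) hcon
    obtain ⟨M, hM⟩ := hU i _ hpos
    set N' := max N M with hN'
    have h1 : v (pSum e w N' i - U i) < v (U i - pSum e w N i) := hM N' (le_max_right _ _)
    have h2 : v (pSum e w N' i - pSum e w N i) ≤ γ ^ (N - 1) := hcau i N N' (le_max_left _ _)
    have : v (U i - pSum e w N i) ≤ max (v (U i - pSum e w N' i)) (v (pSum e w N' i - pSum e w N i)) := by
      have : U i - pSum e w N i = (U i - pSum e w N' i) + (pSum e w N' i - pSum e w N i) := by ring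
      rw [this]
      exact v.map_add _ _
    rw [v.map_sub_swap (U i) (pSum e w N' i)] at this
    have := lt_of_le_of_lt this (max_lt h1 (lt_of_le_of_lt h2 hcon))
    exact lt_irrefl _ this
  -- the two easy sums
  have hseq2 : ∀ i, pSum e w 2 i = coeff (R := K) i w := by
    intro i
    rw [pSum, Finset.sum_range_succ, Finset.sum_range_one, he0, he1, zero_mul, pow_one, one_mul,
      zero_add]
  have hUbd : ∀ i, v (U i) ≤ 1 := by
    intro i
    have hrw : U i = (U i - pSum e w 2 i) + pSum e w 2 i := by ring
    rw [hrw]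
    refine le_trans (v.map_add _ _) (max_le ?_ ?_)
    · exact le_trans (hclose i 2) (by simpa using hγ1.le)
    · rw [hseq2]; exact hw1 i
  have hone_bd : ∀ i, v (coeff (R := K) i (1 : PowerSeries K)) ≤ 1 := by
    intro i
    rw [PowerSeries.coeff_one]
    split <;> simp
  -- coefficient formula for the partial sums of the binomial series
  have hterm : ∀ (j i : ℕ), coeff (R := K) i (C (R := K) ((binomialRootCoeff p n j : ℚ) : K) * (C (R := K) b * w) ^ j)
      = ((binomialRootCoeff p n j : ℚ) : K) * b ^ j * coeff (R := K) i (w ^ j) := by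
    intro j i
    rw [mul_pow, ← map_pow, ← mul_assoc, ← map_mul, coeff_C_mul]
  have hPS : ∀ N, 1 ≤ N → ∀ i, coeff (R := K) i (∑ j ∈ Finset.range N,
      C (R := K) ((binomialRootCoeff p n j : ℚ) : K) * (C (R := K) b * w) ^ j)
      = coeff (R := K) i (1 : PowerSeries K) + a * pSum e w N i := by
    intro N hN i
    rw [map_sum, Finset.sum_congr rfl (fun j _ => hterm j i)]
    rw [Finset.range_eq_Ico, Finset.sum_eq_sum_Ico_succ_bot (by omega : 0 < N)]
    have hsplit2 : pSum e w N i = ∑ j ∈ Finset.Ico 1 N, e j * coeff (R := K) i (w ^ j) := by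
      rw [pSum, Finset.range_eq_Ico, Finset.sum_eq_sum_Ico_succ_bot (by omega : 0 < N), he0,
        zero_mul, zero_add]
    rw [hsplit2, Finset.mul_sum]
    congr 1
    · simp [binomialRootCoeff]
    · apply Finset.sum_congr rfl
      intro j hj
      rw [Finset.mem_Ico] at hj
      rw [← hae j hj.1, mul_assoc]
  refine ⟨PowerSeries.mk U, ?_, ?_, ?_, hva, ?_, ?_⟩
  · intro i
    rw [coeff_mk]
    exact hUbd i
  · intro ε hε
    obtain ⟨N₀, hN₀1, hN₀⟩ := hsmall ε hε
    have hws : ∀ j : ℕ, ∃ Mj : ℕ, ∀ i ≥ Mj, v (coeff (R := K) i (w ^ j)) < ε :=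
      fun j => coeff_pow_small v hw1 hw2 j ε hε
    choose Mw hMw using hws
    refine ⟨(Finset.range N₀).sup Mw, fun i hi => ?_⟩
    have h1 : v (U i - pSum e w N₀ i) < ε := lt_of_le_of_lt (hclose i N₀) (hN₀ N₀ le_rfl)
    have h2 : v (pSum e w N₀ i) < ε := by
      rw [pSum]
      apply v.map_sum_lt hε.ne'
      intro j hj
      rw [map_mul]
      calc v (e j) * v (coeff (R := K) i (w ^ j)) ≤ 1 * v (coeff (R := K) i (w ^ j)) :=
          mul_le_mul_left (hve1 j) _
        _ < ε := by
            rw [one_mul]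
            exact hMw j i (le_trans (Finset.le_sup hj) hi)
    have hrw : U i = (U i - pSum e w N₀ i) + pSum e w N₀ i := by ring
    rw [coeff_mk, hrw]
    exact lt_of_le_of_lt (v.map_add _ _) (max_lt h1 h2)
  · intro i
    rw [map_sub, coeff_mk, ← hseq2 i]
    exact lt_of_le_of_lt (hclose i 2) (by simpa using hγ1)
  · -- the power identity
    set m := p ^ (n - 1) with hmdef
    set r : ℚ := 1 / (p : ℚ) ^ (n - 1) with hrdef
    have hmr : (m : ℚ) * r = 1 := by
      rw [hrdef, hmdef]
      push_cast
      field_simp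
    have hBm : ratBinomialSeries r ^ m = 1 + PowerSeries.X := by
      rw [ratBinomialSeries_pow, hmr, ratBinomialSeries_one]
    have hBco : ∀ j, PowerSeries.coeff (R := ℚ) j (ratBinomialSeries r) = binomialRootCoeff p n j := by
      intro j
      rw [ratBinomialSeries, coeff_mk, ring_choose_rat, binomialRootCoeff, hrdef]
    have hbγ : v b ≤ γ := by
      rw [hb]
      have h1 : v b ≤ q ^ (-(1:ℝ)) := by
        rw [hb]
        apply hmono
        have hn1 : (1:ℝ) ≤ (n:ℝ) := by exact_mod_cast hn.le.trans' (by omega)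
        have : (0:ℝ) < 1 / ((p : ℝ) - 1) := by positivity
        linarith
      rw [hb] at h1
      calc q ^ (-((n : ℝ) + 1 / ((p : ℝ) - 1))) ≤ q ^ (-(1:ℝ)) := h1
        _ = γ := by rw [hγdef, NNReal.rpow_neg_one]
    -- key estimate for every N ≥ 2
    have hkey : ∀ N, 2 ≤ N → ∀ i : ℕ,
        v (coeff (R := K) i ((1 + C (R := K) a * PowerSeries.mk U) ^ m - (1 + C (R := K) b * w))) ≤ γ ^ (N - 1) := by
      intro N hN i
      set Q := trunc N (ratBinomialSeries r) with hQdef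
      have hQco : ∀ k, k < N → Q.coeff k = binomialRootCoeff p n k := by
        intro k hk
        rw [hQdef, coeff_trunc, if_pos hk, hBco]
      have hQco' : ∀ k, N ≤ k → Q.coeff k = 0 := by
        intro k hk
        rw [hQdef, coeff_trunc, if_neg (not_lt.mpr hk)]
      have hQ0 : Q.coeff 0 = 1 := by
        rw [hQco 0 (by omega)]
        simp [binomialRootCoeff]
      have hQne : Q ≠ 0 := by
        intro h
        rw [h] at hQ0
        simp at hQ0
      have hQdeg : Q.natDegree < N := by
        have := degree_trunc_lt (ratBinomialSeries r) N
        rw [← hQdef] at this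
        exact (Polynomial.natDegree_lt_iff_degree_lt hQne).mpr (by exact_mod_cast this)
      have hQeval : Polynomial.eval₂ ((C (R := K)).comp (Rat.castHom K)) (C (R := K) b * w) Q
          = ∑ j ∈ Finset.range N, C (R := K) ((binomialRootCoeff p n j : ℚ) : K) * (C (R := K) b * w) ^ j := by
        rw [Polynomial.eval₂_eq_sum_range' _ (lt_of_lt_of_le hQdeg le_rfl)]
        apply Finset.sum_congr rfl
        intro k hk
        rw [Finset.mem_range] at hk
        rw [hQco k hk]
        rfl
      have hHQ : HPoly v b γ Q := by
        intro k
        rcases lt_or_ge k N with hk | hk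
        · rw [hQco k hk]
          exact hHcb k
        · rw [hQco' k hk]
          simp
      have hHE : HPoly v b γ (Q ^ m - (1 + Polynomial.X)) :=
        HPoly_sub v b γ (HPoly_pow v b γ hHQ m)
          (HPoly_add v b γ (HPoly_one v b γ) (HPoly_X v b γ hbγ))
      have hdvd : (PowerSeries.X : PowerSeries ℚ) ^ N ∣ ((Q : PowerSeries ℚ) - ratBinomialSeries r) := by
        rw [PowerSeries.X_pow_dvd_iff]
        intro k hk
        rw [map_sub, Polynomial.coeff_coe, hQco k hk, hBco k, sub_self]
      have hdvd2 : (PowerSeries.X : PowerSeries ℚ) ^ N ∣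
          ((Q : PowerSeries ℚ) ^ m - ratBinomialSeries r ^ m) :=
        dvd_trans hdvd (sub_dvd_pow_sub_pow _ _ m)
      have hElow : ∀ k, k < N → (Q ^ m - (1 + Polynomial.X)).coeff k = 0 := by
        intro k hk
        have h1 : PowerSeries.coeff (R := ℚ) k ((Q : PowerSeries ℚ) ^ m - ratBinomialSeries r ^ m) = 0 :=
          PowerSeries.X_pow_dvd_iff.mp hdvd2 k hk
        rw [map_sub, sub_eq_zero] at h1
        rw [Polynomial.coeff_sub]
        have h2 : (Q ^ m).coeff k = PowerSeries.coeff (R := ℚ) k ((Q : PowerSeries ℚ) ^ m) := by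
          rw [← Polynomial.coe_pow, Polynomial.coeff_coe]
        rw [h2, h1, hBm, map_add, Polynomial.coeff_add]
        rcases k with _ | _ | k <;>
          simp [Polynomial.coeff_one, Polynomial.coeff_X, PowerSeries.coeff_one, PowerSeries.coeff_X]
      have hEdeg : (Q ^ m - (1 + Polynomial.X)).natDegree < m * N + 2 := by
        apply lt_of_le_of_lt (Polynomial.natDegree_sub_le _ _)
        have h1 : (Q ^ m).natDegree ≤ m * N :=
          le_trans (Polynomial.natDegree_pow_le) (Nat.mul_le_mul_left _ hQdeg.le)
        have h2 : (1 + Polynomial.X : Polynomial ℚ).natDegree ≤ 1 :=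
          le_trans (Polynomial.natDegree_add_le _ _) (by simp)
        have := max_le (h1.trans (by omega : m * N ≤ m * N + 1)) (h2.trans (by omega : 1 ≤ m * N + 1))
        omega
      have hev : ∀ i', v (coeff (R := K) i' (Polynomial.eval₂ ((C (R := K)).comp (Rat.castHom K)) (C (R := K) b * w)
          (Q ^ m - (1 + Polynomial.X)))) ≤ γ ^ N :=
        fun i' => eval_small v b γ w hγ1.le hw1 _ N hEdeg hHE hElow i'
      have hEeval : Polynomial.eval₂ ((C (R := K)).comp (Rat.castHom K)) (C (R := K) b * w)
          (Q ^ m - (1 + Polynomial.X))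
          = (∑ j ∈ Finset.range N, C (R := K) ((binomialRootCoeff p n j : ℚ) : K) * (C (R := K) b * w) ^ j) ^ m
            - (1 + C (R := K) b * w) := by
        rw [Polynomial.eval₂_sub, Polynomial.eval₂_pow, hQeval, Polynomial.eval₂_add,
          Polynomial.eval₂_one, Polynomial.eval₂_X]
      set S := ∑ j ∈ Finset.range N, C (R := K) ((binomialRootCoeff p n j : ℚ) : K) * (C (R := K) b * w) ^ j
        with hSdef
      set F := 1 + C (R := K) a * PowerSeries.mk U with hFdef
      -- bounded coefficient facts
      have hFbd : ∀ i', v (coeff (R := K) i' F) ≤ 1 := by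
        intro i'
        rw [hFdef, map_add, coeff_C_mul, coeff_mk]
        refine le_trans (v.map_add _ _) (max_le (hone_bd i') ?_)
        rw [map_mul]
        exact mul_le_one' hva_le1 (hUbd i')
      have hseqbd : ∀ N' i', v (pSum e w N' i') ≤ 1 := by
        intro N' i'
        rw [pSum]
        apply v.map_sum_le
        intro j _
        rw [map_mul]
        exact mul_le_one' (hve1 j) (coeff_bdd_pow v hw1 j i')
      have hSbd : ∀ i', v (coeff (R := K) i' S) ≤ 1 := by
        intro i'
        rw [hSdef, hPS N (by omega) i']
        refine le_trans (v.map_add _ _) (max_le (hone_bd i') ?_)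
        rw [map_mul]
        exact mul_le_one' hva_le1 (hseqbd N i')
      have hFS : ∀ i', v (coeff (R := K) i' (F - S)) ≤ γ ^ (N - 1) := by
        intro i'
        rw [map_sub, hFdef, map_add, coeff_C_mul, coeff_mk, hSdef, hPS N (by omega) i']
        have hrw : coeff (R := K) i' (1 : PowerSeries K) + a * U i'
            - (coeff (R := K) i' (1 : PowerSeries K) + a * pSum e w N i') = a * (U i' - pSum e w N i') := by
          ring
        rw [hrw, map_mul]
        have := mul_le_mul' hva_le1 (hclose i' N)
        rwa [one_mul] at this
      have hgeom := geom_sum₂_mul F S m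
      have hGbd : ∀ i', v (coeff (R := K) i' (∑ t ∈ Finset.range m, F ^ t * S ^ (m - 1 - t))) ≤ 1 := by
        intro i'
        rw [map_sum]
        apply v.map_sum_le
        intro t _
        exact coeff_bdd_mul v (coeff_bdd_pow v hFbd t) (coeff_bdd_pow v hSbd (m - 1 - t)) i'
      have hFm : ∀ i', v (coeff (R := K) i' (F ^ m - S ^ m)) ≤ γ ^ (N - 1) := by
        intro i'
        rw [← hgeom, coeff_mul]
        apply v.map_sum_le
        intro x _
        rw [map_mul]
        have := mul_le_mul' (hGbd x.1) (hFS x.2)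
        rwa [one_mul] at this
      have hdecomp : F ^ m - (1 + C (R := K) b * w) = (F ^ m - S ^ m) + (S ^ m - (1 + C (R := K) b * w)) := by
        ring
      rw [hdecomp]
      refine le_trans (v.map_add _ _) (max_le (hFm i) ?_)
      rw [← hEeval]
      refine le_trans (hev i) ?_
      exact pow_le_pow_of_le_one (zero_le) hγ1.le (by omega)
    -- conclude
    have hzero : ∀ i, coeff (R := K) i ((1 + C (R := K) a * PowerSeries.mk U) ^ m - (1 + C (R := K) b * w)) = 0 := by
      intro i
      by_contra hne
      have hpos : 0 < v (coeff (R := K) i ((1 + C (R := K) a * PowerSeries.mk U) ^ m - (1 + C (R := K) b * w))) :=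
        pos_iff_ne_zero.mpr (v.ne_zero_iff.mpr hne)
      obtain ⟨N, hN1, hN⟩ := hsmall _ hpos
      have h1 := hkey (max N 2) (le_max_right _ _) i
      have h2 := hN (max N 2 - 1 + 1) (by omega)
      have h3 : γ ^ (max N 2 - 1 + 1 - 1) = γ ^ (max N 2 - 1) := by norm_num
      rw [h3] at h2
      exact absurd (lt_of_le_of_lt h1 h2) (lt_irrefl _)
    have hfin : (1 + C (R := K) a * PowerSeries.mk U) ^ m - (1 + C (R := K) b * w) = 0 :=
      PowerSeries.ext fun i => by rw [hzero i, map_zero]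
    exact sub_eq_zero.mp hfin
  · intro ε hε
    obtain ⟨M, hM1, hM⟩ := hsmall ε hε
    refine ⟨M, fun N hN i => ?_⟩
    rw [map_sub, hPS N (le_trans hM1 hN) i]
    have hco : coeff (R := K) i (1 + C (R := K) a * PowerSeries.mk U)
        = coeff (R := K) i (1 : PowerSeries K) + a * U i := by
      rw [map_add, coeff_C_mul, coeff_mk]
    rw [hco]
    have hrw : coeff (R := K) i (1 : PowerSeries K) + a * pSum e w N i
        - (coeff (R := K) i (1 : PowerSeries K) + a * U i) = a * (pSum e w N i - U i) := by ring
    rw [hrw, map_mul]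
    have hstep : v a * v (pSum e w N i - U i) ≤ 1 * γ ^ (N - 1) := by
      refine mul_le_mul' hva_le1 ?_
      rw [v.map_sub_swap]
      exact hclose i N
    rw [one_mul] at hstep
    exact lt_of_le_of_lt hstep (hM N hN)
end

section
/- Let G be a finite group with normal subgroup N of order prime to p, and let P be a cyclic p-Sylow subgroup of G. Then the image of N_G(P)/Z_G(P) in terms of cardinality is preserved under the quotient: m_G = m_{G/N}, where m_H = |N_H(Q)/Z_H(Q)| for Q a p-Sylow subgroup of H. -/
open Subgroup QuotientGroup


/-- For a finite group `G` with cyclic `p`-Sylow subgroup `P` and a normal subgroup `N` of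
order prime to `p`, one has `m_G = m_{G/N}`, where `m_H = |N_H(Q)/Z_H(Q)|` for a `p`-Sylow
subgroup `Q` of `H` and the `p`-Sylow subgroup of `G/N` is the image of `P`. -/
theorem mG_eq_mGN (p : ℕ) (hp : p.Prime) (G : Type*) [Group G] [Finite G]
    (P : Sylow p G) (hcyc : IsCyclic ↥(P : Subgroup G))
    (N : Subgroup G) [N.Normal] (hN : ¬ p ∣ Nat.card N) :
    (Subgroup.centralizer ((P : Subgroup G) : Set G)).relIndex (Subgroup.normalizer ((P : Subgroup G) : Set G)) =
      (Subgroup.centralizer ((Subgroup.map (QuotientGroup.mk' N) (P : Subgroup G)) :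
          Set (G ⧸ N))).relIndex
        (Subgroup.normalizer ((Subgroup.map (QuotientGroup.mk' N) (P : Subgroup G)) :
          Set (G ⧸ N))) := by
  haveI : Fact p.Prime := ⟨hp⟩
  set π := QuotientGroup.mk' N with hπ
  set Pg : Subgroup G := (P : Subgroup G) with hPg
  set Q : Subgroup (G ⧸ N) := Pg.map π with hQ
  -- (1) disjointness
  have hPN : Pg ⊓ N = ⊥ := by
    apply inf_eq_bot_of_coprime
    obtain ⟨n, hn⟩ := IsPGroup.iff_card.mp P.2
    rw [hn]
    exact ((Nat.Prime.coprime_iff_not_dvd hp).mpr hN).pow_left n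
  -- membership in N via π
  have hmemN : ∀ x : G, π x = 1 ↔ x ∈ N := by
    intro x
    exact QuotientGroup.eq_one_iff x
  -- (3) key: for g in normalizer, π g centralizes Q iff g centralizes P
  have key : ∀ g ∈ (Subgroup.normalizer (Pg : Set G)),
      (π g ∈ Subgroup.centralizer (Q : Set (G ⧸ N)) ↔ g ∈ Subgroup.centralizer (Pg : Set G)) := by
    intro g hg
    rw [mem_centralizer_iff, mem_centralizer_iff]
    constructor
    · intro h x hx
      have h1 : g * x * g⁻¹ ∈ Pg := (mem_normalizer_iff.mp hg x).mp hx
      have h2 : g * x * g⁻¹ * x⁻¹ ∈ Pg := Pg.mul_mem h1 (Pg.inv_mem hx)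
      have h3 : π (g * x * g⁻¹ * x⁻¹) = 1 := by
        have hc := h (π x) ⟨x, hx, rfl⟩
        simp only [map_mul, map_inv]
        rw [← hc]
        group
      have h4 : g * x * g⁻¹ * x⁻¹ ∈ Pg ⊓ N := ⟨h2, (hmemN _).mp h3⟩
      rw [hPN, mem_bot] at h4
      have : g * x = x * g := by
        have := congrArg (· * x * g) h4
        simpa [mul_assoc] using this
      exact this.symm
    · rintro h y ⟨x, hx, rfl⟩
      have := h x hx
      simp only [← map_mul, this]
  -- π maps normalizer into normalizer
  have hmapnorm : ∀ g ∈ (Subgroup.normalizer (Pg : Set G)), π g ∈ (Subgroup.normalizer (Q : Set (G ⧸ N))) := by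
    intro g hg
    rw [mem_normalizer_iff]
    intro h
    constructor
    · rintro ⟨x, hx, rfl⟩
      exact ⟨g * x * g⁻¹, (mem_normalizer_iff.mp hg x).mp hx, by simp [map_mul]⟩
    · rintro ⟨y, hy, hyeq⟩
      have hginv : g⁻¹ ∈ (Subgroup.normalizer (Pg : Set G)) := inv_mem hg
      refine ⟨g⁻¹ * y * g, ?_, ?_⟩
      · have := (mem_normalizer_iff.mp hginv y).mp hy
        simpa using this
      · have : π y = π g * h * (π g)⁻¹ := hyeq
        simp [map_mul, this, mul_assoc]
  -- (2) surjectivity onto normalizer of Q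
  have hsurj : ∀ q ∈ (Subgroup.normalizer (Q : Set (G ⧸ N))), ∃ g ∈ (Subgroup.normalizer (Pg : Set G)), π g = q := by
    intro q hq
    obtain ⟨c, rfl⟩ := QuotientGroup.mk'_surjective N q
    set H : Subgroup G := Pg ⊔ N with hH
    have hcomap : Q.comap π = H := by
      rw [hQ, comap_map_eq, QuotientGroup.ker_mk']
    have hmemH : ∀ x : G, x ∈ H ↔ π x ∈ Q := by
      intro x; rw [← hcomap]; rfl
    have hcH : c ∈ (Subgroup.normalizer (H : Set G)) := by
      rw [mem_normalizer_iff]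
      intro h
      rw [hmemH, hmemH]
      simp only [map_mul, map_inv]
      exact mem_normalizer_iff.mp hq (π h)
    set K : Subgroup G := (Subgroup.normalizer (H : Set G)) with hK
    have hPK : Pg ≤ K := le_trans le_sup_left le_normalizer
    have hPH : Pg ≤ H := le_sup_left
    -- forward conjugation lemma
    have fwd : ∀ m : K, m ∈ (Subgroup.normalizer ((Pg.subgroupOf K) : Set K)) → ∀ t ∈ Pg, (↑m * t * (↑m)⁻¹ : G) ∈ Pg := by
      intro m hm t ht
      have htK : t ∈ K := hPK ht
      have h1 : (⟨t, htK⟩ : K) ∈ Pg.subgroupOf K := by simpa [mem_subgroupOf] using ht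
      have h2 := (mem_normalizer_iff.mp hm ⟨t, htK⟩).mp h1
      simpa [mem_subgroupOf] using h2
    have nlift : ∀ m : K, m ∈ (Subgroup.normalizer ((Pg.subgroupOf K) : Set K)) → (m : G) ∈ (Subgroup.normalizer (Pg : Set G)) := by
      intro m hm
      rw [mem_normalizer_iff]
      intro t
      constructor
      · exact fun ht => fwd m hm t ht
      · intro ht
        have h2 := fwd m⁻¹ (inv_mem hm) _ ht
        have : ((m⁻¹ : K) : G) * (↑m * t * (↑m)⁻¹) * ((m⁻¹ : K) : G)⁻¹ = t := by
          simp; group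
        rwa [this] at h2
    -- Frattini inside K
    haveI : (H.subgroupOf K).Normal := Subgroup.normal_in_normalizer
    set P' : Sylow p K := P.subtype hPK with hP'
    have hP'H : (P' : Subgroup K) ≤ H.subgroupOf K := by
      rw [hP', Sylow.coe_subtype]
      intro x hx
      rw [mem_subgroupOf] at hx ⊢
      exact hPH hx
    have hfratt := Sylow.normalizer_sup_eq_top' P' hP'H
    have hcK : c ∈ K := hcH
    have hctop : (⟨c, hcK⟩ : K) ∈ (Subgroup.normalizer (P' : Set K)) ⊔ H.subgroupOf K := by
      rw [hfratt]; trivial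
    rw [← SetLike.mem_coe, Subgroup.mul_normal] at hctop
    obtain ⟨n, hn, h, hh, hnh⟩ := hctop
    -- h ∈ H, so π h ∈ Q = π(Pg)
    have hhH : (h : G) ∈ H := by
      exact mem_subgroupOf.mp hh
    obtain ⟨x, hxP, hxπ⟩ : ∃ x ∈ Pg, π x = π (h : G) := (hmemH _).mp hhH
    have hnPg : (n : G) ∈ (Subgroup.normalizer (Pg : Set G)) := by
      apply nlift n
      change n ∈ Subgroup.normalizer (((P.subtype hPK : Sylow p K) : Subgroup K) : Set K) at hn
      rwa [Sylow.coe_subtype] at hn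
    refine ⟨(n : G) * x, mul_mem hnPg (le_normalizer hxP), ?_⟩
    have hc : (n : G) * (h : G) = c := by
      exact congrArg Subtype.val hnh
    rw [map_mul, hxπ, ← map_mul, hc]
  -- assemble the isomorphism
  have hQnorm : ∀ g : (Subgroup.normalizer (Pg : Set G)), π (g : G) ∈ (Subgroup.normalizer (Q : Set (G ⧸ N))) := fun g => hmapnorm g g.2
  set f : (Subgroup.normalizer (Pg : Set G)) →* (Subgroup.normalizer (Q : Set (G ⧸ N))) :=
    MonoidHom.codRestrict (π.comp (Subgroup.normalizer (Pg : Set G)).subtype) (Subgroup.normalizer (Q : Set (G ⧸ N))) hQnorm with hf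
  have hfsurj : Function.Surjective f := by
    rintro ⟨q, hq⟩
    obtain ⟨g, hg, hgq⟩ := hsurj q hq
    exact ⟨⟨g, hg⟩, Subtype.ext hgq⟩
  haveI : ((Subgroup.centralizer (Q : Set (G ⧸ N))).subgroupOf (Subgroup.normalizer (Q : Set (G ⧸ N)))).Normal := by
    rw [← Subgroup.normalizerMonoidHom_ker]
    infer_instance
  set F := (QuotientGroup.mk' ((Subgroup.centralizer (Q : Set (G ⧸ N))).subgroupOf (Subgroup.normalizer (Q : Set (G ⧸ N))))).comp f with hF
  have hFsurj : Function.Surjective F :=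
    (QuotientGroup.mk'_surjective _).comp hfsurj
  have hker : F.ker = (Subgroup.centralizer (Pg : Set G)).subgroupOf (Subgroup.normalizer (Pg : Set G)) := by
    ext g
    rw [MonoidHom.mem_ker, hF, MonoidHom.comp_apply, ← MonoidHom.mem_ker,
      QuotientGroup.ker_mk', mem_subgroupOf, mem_subgroupOf]
    exact key g g.2
  calc (Subgroup.centralizer (Pg : Set G)).relIndex (Subgroup.normalizer (Pg : Set G))
      = F.ker.index := by rw [hker]; rfl
    _ = Nat.card F.range := Subgroup.index_ker F
    _ = Nat.card ((Subgroup.normalizer (Q : Set (G ⧸ N))) ⧸ (Subgroup.centralizer (Q : Set (G ⧸ N))).subgroupOf (Subgroup.normalizer (Q : Set (G ⧸ N)))) := by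
        rw [MonoidHom.range_eq_top.mpr hFsurj]
        exact Nat.card_congr Subgroup.topEquiv.toEquiv
    _ = (Subgroup.centralizer (Q : Set (G ⧸ N))).relIndex (Subgroup.normalizer (Q : Set (G ⧸ N))) := rfl
end
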